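/- If p11 ≥ p01 and ω ≤ ω' < ω_o, then the crossing time L(ω,ω') = min{k : T^k(ω) > ω'} is finite and equals ⌊log_{p11-p01}((p01 - ω'(1-p11+p01))/(p01 - ω(1-p11+p01)))⌋ + 1 (assuming p11 > p01). -/
import Mathlib


theorem stmt6 (p01 p11 : ℝ) (h01 : p01 ∈ Set.Ioo (0:ℝ) 1) (h11 : p11 ∈ Set.Ioo (0:ℝ) 1)
    (hlt : p01 < p11)
    (T : ℝ → ℝ) (hT : ∀ ω, T ω = ω * p11 + (1 - ω) * p01)
    (ωo : ℝ) (hωo : ωo = p01 / (1 + p01 - p11))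
    (ω ω' : ℝ) (hω0 : 0 ≤ ω) (hle : ω ≤ ω') (hlt' : ω' < ωo) :
    (∃ k : ℕ, T^[k] ω > ω') ∧
    ((sInf {k : ℕ | T^[k] ω > ω'} : ℕ) : ℤ) =
      ⌊Real.log ((p01 - ω' * (1 - p11 + p01)) / (p01 - ω * (1 - p11 + p01))) /
        Real.log (p11 - p01)⌋ + 1 := by
  obtain ⟨hp01, hp01'⟩ := h01
  obtain ⟨hp11, hp11'⟩ := h11
  set r : ℝ := p11 - p01 with hr
  have hr0 : 0 < r := by simp [hr]; linarith
  have hr1 : r < 1 := by simp [hr]; linarith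
  have h1r : 0 < 1 - r := by linarith
  have h1r' : (1 : ℝ) + p01 - p11 = 1 - r := by ring
  have hfix : ωo * (1 - r) = p01 := by
    rw [hωo, h1r']
    field_simp
  have hωlt : ω < ωo := lt_of_le_of_lt hle hlt'
  have key : ∀ k : ℕ, T^[k] ω = ωo - (ωo - ω) * r ^ k := by
    intro k
    induction k with
    | zero => simp
    | succ k ih =>
      rw [Function.iterate_succ_apply', ih, hT]
      linear_combination -hfix - (ωo - (ωo - ω) * r ^ k) * hr
  set c : ℝ := (ωo - ω') / (ωo - ω) with hc
  have hden : 0 < ωo - ω := by linarith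
  have hnum : 0 < ωo - ω' := by linarith
  have hcpos : 0 < c := div_pos hnum hden
  have hc1 : c ≤ 1 := by
    rw [div_le_one hden]; linarith
  have hlogr : Real.log r < 0 := Real.log_neg hr0 hr1
  set x : ℝ := Real.log c / Real.log r with hx
  have hx0 : 0 ≤ x := by
    have h5 := div_nonneg (neg_nonneg.mpr (Real.log_nonpos hcpos.le hc1))
      (neg_nonneg.mpr hlogr.le)
    rwa [neg_div_neg_eq] at h5
  have hiff : ∀ k : ℕ, T^[k] ω > ω' ↔ x < (k : ℝ) := by
    intro k
    rw [key k]
    constructor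
    · intro h
      have h2 : r ^ k < c := by
        rw [hc, lt_div_iff₀ hden]
        nlinarith
      have h3 : Real.log (r ^ k) < Real.log c :=
        Real.log_lt_log (pow_pos hr0 k) h2
      rw [Real.log_pow] at h3
      rwa [hx, div_lt_iff_of_neg hlogr]
    · intro h
      rw [hx, div_lt_iff_of_neg hlogr] at h
      have h3 : Real.log (r ^ k) < Real.log c := by rwa [Real.log_pow]
      have h2 : r ^ k < c := by
        have := Real.exp_lt_exp.mpr h3
        rwa [Real.exp_log (pow_pos hr0 k), Real.exp_log hcpos] at this
      rw [hc, lt_div_iff₀ hden] at h2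
      nlinarith
  set N : ℕ := ⌊x⌋.toNat + 1 with hN
  have hxfloor : (0:ℤ) ≤ ⌊x⌋ := Int.floor_nonneg.mpr hx0
  have hNx : x < (N : ℝ) := by
    have : x < (⌊x⌋ : ℝ) + 1 := Int.lt_floor_add_one x
    have h4 : ((⌊x⌋.toNat : ℤ) : ℝ) = ((⌊x⌋ : ℤ) : ℝ) := by
      rw [Int.toNat_of_nonneg hxfloor]
    push_cast [hN]
    push_cast at h4
    linarith
  have hNmem : N ∈ {k : ℕ | T^[k] ω > ω'} := (hiff N).mpr hNx
  refine ⟨⟨N, hNmem⟩, ?_⟩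
  have hsInf : sInf {k : ℕ | T^[k] ω > ω'} = N := by
    apply le_antisymm (Nat.sInf_le hNmem)
    have hmem := Nat.sInf_mem ⟨N, hNmem⟩
    set m := sInf {k : ℕ | T^[k] ω > ω'} with hm
    have hxm : x < (m : ℝ) := (hiff m).mp hmem
    have : (⌊x⌋ : ℤ) < (m : ℤ) := by
      rw [Int.floor_lt]; push_cast; linarith
    omega
  have hcarg : (p01 - ω' * (1 - p11 + p01)) / (p01 - ω * (1 - p11 + p01)) = c := by
    have e1 : p01 - ω' * (1 - p11 + p01) = (ωo - ω') * (1 - r) := by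
      linear_combination -hfix - ω' * hr
    have e2 : p01 - ω * (1 - p11 + p01) = (ωo - ω) * (1 - r) := by
      linear_combination -hfix - ω * hr
    rw [e1, e2, hc, mul_div_mul_right _ _ (ne_of_gt h1r)]
  rw [hsInf, hcarg]
  have : Real.log c / Real.log (p11 - p01) = x := rfl
  rw [this]
  push_cast [hN]
  rw [Int.toNat_of_nonneg hxfloor]
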